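/- Let m ≥ 1 be an integer and let ζ : ℝ^d → ℝ^d be m-times continuously differentiable with λ := inf_{θ∈[0,1]} inf_{x∈ℝ^d} |det(I + θ Dζ(x))| > 0 and M_m := max_{0≤k≤m} sup_{x∈ℝ^d} |D^k ζ(x)| < ∞. Let τ(x) = x + ζ(x), ζ*(x) = −x + τ^{-1}(x), and define 𝔠(x) = det(I + Dζ*(x)) − 1. Then for every integer k with 0 ≤ k ≤ m−1 one has sup_{x∈ℝ^d} |D^k 𝔠(x)| ≤ N · max_{1≤j≤k+1} sup_{ℝ^d} |D^j ζ| with a constant N = N(d, λ, m, M_m). -/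

import Mathlib

set_option synthInstance.maxHeartbeats 1000000
set_option maxHeartbeats 2000000

open MeasureTheory Real

noncomputable section

/-- `ℝ^d` with the Euclidean norm. -/
abbrev Rd (d : ℕ) : Type := EuclideanSpace ℝ (Fin d)

namespace St3

variable {d : ℕ}

lemma abs_coord_le (x : Rd d) (p : Fin d) : |x p| ≤ ‖x‖ := by
  rw [EuclideanSpace.norm_eq]
  have h : |x p| = Real.sqrt (‖x p‖ ^ 2) := by
    rw [Real.sqrt_sq_eq_abs]; simp [abs_abs, Real.norm_eq_abs]
  rw [h]
  apply Real.sqrt_le_sqrt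
  exact Finset.single_le_sum (f := fun i => ‖x i‖ ^ 2) (fun i _ => by positivity)
    (Finset.mem_univ p)

/-- the matrix entry functional on continuous linear maps -/
def ent (p q : Fin d) : (Rd d →L[ℝ] Rd d) →L[ℝ] ℝ :=
  (EuclideanSpace.proj p).comp (ContinuousLinearMap.apply ℝ (Rd d) (EuclideanSpace.single q 1))

lemma ent_apply (p q : Fin d) (A : Rd d →L[ℝ] Rd d) :
    ent p q A = A (EuclideanSpace.single q 1) p := rfl

lemma norm_ent_apply_le (p q : Fin d) (A : Rd d →L[ℝ] Rd d) :
    ‖ent p q A‖ ≤ ‖A‖ := by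
  rw [ent_apply, Real.norm_eq_abs]
  refine (abs_coord_le _ _).trans ?_
  have := A.le_opNorm (EuclideanSpace.single q 1)
  simpa [EuclideanSpace.norm_single] using this

lemma det_expand (A : Rd d →L[ℝ] Rd d) :
    A.det = ∑ σ : Equiv.Perm (Fin d),
      ((Equiv.Perm.sign σ : ℤ) : ℝ) * ∏ p : Fin d, ent (σ p) p A := by
  classical
  have hb : A.det = (LinearMap.toMatrix (EuclideanSpace.basisFun (Fin d) ℝ).toBasis
      (EuclideanSpace.basisFun (Fin d) ℝ).toBasis (A : Rd d →ₗ[ℝ] Rd d)).det :=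
    (LinearMap.det_toMatrix _ _).symm
  rw [hb, Matrix.det_apply']
  refine Finset.sum_congr rfl fun σ _ => ?_
  congr 1

lemma contDiff_det : ContDiff ℝ (⊤ : ℕ∞) (fun A : Rd d →L[ℝ] Rd d => A.det) := by
  classical
  have h : (fun A : Rd d →L[ℝ] Rd d => A.det) = fun A => ∑ σ : Equiv.Perm (Fin d),
      ((Equiv.Perm.sign σ : ℤ) : ℝ) * ∏ p : Fin d, ent (σ p) p A := by
    funext A; exact det_expand A
  rw [h]
  refine ContDiff.sum fun σ _ => ?_
  exact contDiff_const.mul (contDiff_prod (fun p _ => (ent (σ p) p).contDiff))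


/-- Uniform bound for iterated derivatives (within an open set) over a compact set. -/
lemma bound_on_compact {F G : Type*} [NormedAddCommGroup F] [NormedSpace ℝ F]
    [NormedAddCommGroup G] [NormedSpace ℝ G] {f : F → G} {t : Set F} (ht : IsOpen t)
    (hf : ContDiffOn ℝ (⊤ : ℕ∞) f t) {K : Set F} (hK : IsCompact K) (hKt : K ⊆ t) (n : ℕ) :
    ∃ Cb : ℝ, 0 ≤ Cb ∧ ∀ r ≤ n, ∀ z ∈ K, ‖iteratedFDerivWithin ℝ r f t z‖ ≤ Cb := by
  have hb : ∀ r : ℕ, ∃ Cr : ℝ, ∀ z ∈ K, ‖iteratedFDerivWithin ℝ r f t z‖ ≤ Cr := by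
    intro r
    have hcont : ContinuousOn (iteratedFDerivWithin ℝ r f t) t :=
      hf.continuousOn_iteratedFDerivWithin (by exact_mod_cast le_top) ht.uniqueDiffOn
    exact hK.exists_bound_of_continuousOn (hcont.mono hKt)
  choose g hg using hb
  refine ⟨∑ r ∈ Finset.range (n + 1), max 0 (g r), ?_, ?_⟩
  · exact Finset.sum_nonneg fun r _ => le_max_left _ _
  · intro r hr z hz
    calc ‖iteratedFDerivWithin ℝ r f t z‖ ≤ g r := hg r z hz
      _ ≤ max 0 (g r) := le_max_right _ _
      _ ≤ ∑ s ∈ Finset.range (n + 1), max 0 (g s) :=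
        Finset.single_le_sum (f := fun s => max 0 (g s)) (fun s _ => le_max_left _ _)
          (Finset.mem_range.2 (Nat.lt_succ_of_le hr))

/-- global version -/
lemma bound_on_compact' {F G : Type*} [NormedAddCommGroup F] [NormedSpace ℝ F]
    [NormedAddCommGroup G] [NormedSpace ℝ G] {f : F → G}
    (hf : ContDiff ℝ (⊤ : ℕ∞) f) {K : Set F} (hK : IsCompact K) (n : ℕ) :
    ∃ Cb : ℝ, 0 ≤ Cb ∧ ∀ r ≤ n, ∀ z ∈ K, ‖iteratedFDeriv ℝ r f z‖ ≤ Cb := by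
  obtain ⟨Cb, h0, h⟩ := bound_on_compact isOpen_univ hf.contDiffOn hK (Set.subset_univ K) n
  exact ⟨Cb, h0, fun r hr z hz => by
    simpa [iteratedFDerivWithin_univ] using h r hr z hz⟩

section withzeta

variable {m : ℕ} {lam Mm : ℝ} {ζ : Rd d → Rd d}

/-- the map `y ↦ I + Dζ(y)` -/
def Bmap (ζ : Rd d → Rd d) (y : Rd d) : Rd d →L[ℝ] Rd d :=
  ContinuousLinearMap.id ℝ (Rd d) + fderiv ℝ ζ y

lemma det_Bmap_ge (hlam : 0 < lam)
    (hdet : ∀ θ ∈ Set.Icc (0 : ℝ) 1, ∀ x : Rd d,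
      lam ≤ |(ContinuousLinearMap.id ℝ (Rd d) + θ • fderiv ℝ ζ x).det|) (y : Rd d) :
    lam ≤ (Bmap ζ y).det := by
  set f : ℝ → ℝ := fun θ => (ContinuousLinearMap.id ℝ (Rd d) + θ • fderiv ℝ ζ y).det with hf
  have hcont : Continuous f := by
    apply ContinuousLinearMap.continuous_det.comp
    exact continuous_const.add (continuous_id.smul continuous_const)
  have hf0 : f 0 = 1 := by
    simp [hf, ContinuousLinearMap.det, ContinuousLinearMap.coe_id, LinearMap.det_id]
  have hf1 : f 1 = (Bmap ζ y).det := by simp [hf, Bmap]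
  by_contra hcon
  push_neg at hcon
  have habs : ∀ θ ∈ Set.Icc (0 : ℝ) 1, lam ≤ |f θ| := fun θ hθ => hdet θ hθ y
  have hlam1 : lam ≤ 1 := by
    have := habs 0 ⟨le_refl 0, zero_le_one⟩
    rwa [hf0, abs_one] at this
  have hneg : f 1 ≤ -lam := by
    have := habs 1 ⟨zero_le_one, le_refl 1⟩
    rcases abs_cases (f 1) with ⟨he, _⟩ | ⟨he, _⟩
    · rw [he] at this; rw [hf1] at this ⊢; linarith [hcon.le, this]
    · linarith [this, he.symm.le, he.ge]
  -- intermediate value: f 1 ≤ 0 ≤ f 0, find zero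
  obtain ⟨θ, hθmem, hθ⟩ : ∃ θ ∈ Set.Icc (0 : ℝ) 1, f θ = 0 := by
    have : (0 : ℝ) ∈ Set.Icc (f 1) (f 0) := ⟨by linarith, by rw [hf0]; linarith⟩
    obtain ⟨θ, hθmem, hθ⟩ := intermediate_value_Icc' zero_le_one hcont.continuousOn this
    exact ⟨θ, hθmem, hθ⟩
  have := habs θ hθmem
  rw [hθ, abs_zero] at this
  linarith

lemma det_Bmap_ne (hlam : 0 < lam)
    (hdet : ∀ θ ∈ Set.Icc (0 : ℝ) 1, ∀ x : Rd d,
      lam ≤ |(ContinuousLinearMap.id ℝ (Rd d) + θ • fderiv ℝ ζ x).det|) (y : Rd d) :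
    (Bmap ζ y).det ≠ 0 :=
  ne_of_gt (lt_of_lt_of_le hlam (det_Bmap_ge hlam hdet y))

end withzeta

/-- continuous linear equiv from nonzero determinant -/
def cleOf (A : Rd d →L[ℝ] Rd d) (h : A.det ≠ 0) : Rd d ≃L[ℝ] Rd d :=
  (LinearMap.equivOfDetNeZero (A : Rd d →ₗ[ℝ] Rd d) h).toContinuousLinearEquiv

lemma cleOf_coe (A : Rd d →L[ℝ] Rd d) (h : A.det ≠ 0) :
    ((cleOf A h : Rd d ≃L[ℝ] Rd d) : Rd d →L[ℝ] Rd d) = A := by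
  ext x
  rfl

lemma ring_inverse_eq_symm (e : Rd d ≃L[ℝ] Rd d) :
    Ring.inverse ((e : Rd d →L[ℝ] Rd d)) = ((e.symm : Rd d →L[ℝ] Rd d)) := by
  let u : (Rd d →L[ℝ] Rd d)ˣ :=
    ⟨e, e.symm, by ext x; simp [ContinuousLinearMap.mul_apply],
      by ext x; simp [ContinuousLinearMap.mul_apply]⟩
  exact Ring.inverse_unit u


section iota

variable {m : ℕ} {lam : ℝ} {ζ ι : Rd d → Rd d}

lemma iota_facts (hm : 1 ≤ m) (hlam : 0 < lam)
    (hζ : ContDiff ℝ (m : ℕ∞) ζ)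
    (hdet : ∀ θ ∈ Set.Icc (0 : ℝ) 1, ∀ x : Rd d,
      lam ≤ |(ContinuousLinearMap.id ℝ (Rd d) + θ • fderiv ℝ ζ x).det|)
    (h1 : Function.LeftInverse ι (fun x => x + ζ x))
    (h2 : Function.RightInverse ι (fun x => x + ζ x)) (x : Rd d) :
    ContDiffAt ℝ (m : ℕ∞) ι x ∧
      fderiv ℝ ι x = ((cleOf (Bmap ζ (ι x)) (det_Bmap_ne hlam hdet (ι x))).symm
        : Rd d →L[ℝ] Rd d) := by
  set τ : Rd d → Rd d := fun y => y + ζ y with hτdef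
  have hτ : ContDiff ℝ (m : ℕ∞) τ := contDiff_id.add hζ
  have hm' : (1 : WithTop ℕ∞) ≤ ((m : ℕ∞) : WithTop ℕ∞) := by exact_mod_cast hm
  set a := ι x with ha
  set e := cleOf (Bmap ζ a) (det_Bmap_ne hlam hdet a) with he
  have hζd : Differentiable ℝ ζ := hζ.differentiable (ne_of_gt (lt_of_lt_of_le zero_lt_one hm'))
  have hτ'a : HasFDerivAt τ ((e : Rd d →L[ℝ] Rd d)) a := by
    rw [he, cleOf_coe]
    exact (hasFDerivAt_id a).add (hζd a).hasFDerivAt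
  have hτa : τ a = x := h2 x
  -- local inverse
  have hstrict := (hτ.contDiffAt).hasStrictFDerivAt' hτ'a (ne_of_gt (lt_of_lt_of_le zero_lt_one hm'))
  set g' := (hτ.contDiffAt).localInverse hτ'a (ne_of_gt (lt_of_lt_of_le zero_lt_one hm')) with hg'def
  have hg' : ContDiffAt ℝ (m : ℕ∞) g' (τ a) := (hτ.contDiffAt).to_localInverse hτ'a (ne_of_gt (lt_of_lt_of_le zero_lt_one hm'))
  have hev : ∀ᶠ y in nhds (τ a), τ (g' y) = y := hstrict.eventually_right_inverse
  have hιg : ι =ᶠ[nhds (τ a)] g' := by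
    filter_upwards [hev] with y hy
    calc ι y = ι (τ (g' y)) := by rw [hy]
      _ = g' y := h1 (g' y)
  have hcd : ContDiffAt ℝ (m : ℕ∞) ι x := by
    rw [← hτa]
    exact hg'.congr_of_eventuallyEq hιg
  have hfd : HasFDerivAt ι ((e.symm : Rd d →L[ℝ] Rd d)) x := by
    refine HasFDerivAt.of_local_left_inverse (hcd.continuousAt) ?_
      (Filter.Eventually.of_forall (fun y => h2 y))
    exact hτ'a
  exact ⟨hcd, hfd.fderiv⟩

lemma iota_contDiff (hm : 1 ≤ m) (hlam : 0 < lam)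
    (hζ : ContDiff ℝ (m : ℕ∞) ζ)
    (hdet : ∀ θ ∈ Set.Icc (0 : ℝ) 1, ∀ x : Rd d,
      lam ≤ |(ContinuousLinearMap.id ℝ (Rd d) + θ • fderiv ℝ ζ x).det|)
    (h1 : Function.LeftInverse ι (fun x => x + ζ x))
    (h2 : Function.RightInverse ι (fun x => x + ζ x)) :
    ContDiff ℝ (m : ℕ∞) ι :=
  contDiff_iff_contDiffAt.2 fun x => (iota_facts hm hlam hζ hdet h1 h2 x).1

lemma fderiv_iota (hm : 1 ≤ m) (hlam : 0 < lam)
    (hζ : ContDiff ℝ (m : ℕ∞) ζ)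
    (hdet : ∀ θ ∈ Set.Icc (0 : ℝ) 1, ∀ x : Rd d,
      lam ≤ |(ContinuousLinearMap.id ℝ (Rd d) + θ • fderiv ℝ ζ x).det|)
    (h1 : Function.LeftInverse ι (fun x => x + ζ x))
    (h2 : Function.RightInverse ι (fun x => x + ζ x)) (x : Rd d) :
    fderiv ℝ ι x = Ring.inverse (Bmap ζ (ι x)) := by
  rw [(iota_facts hm hlam hζ hdet h1 h2 x).2, ← ring_inverse_eq_symm, cleOf_coe]

lemma det_fderiv_iota (hm : 1 ≤ m) (hlam : 0 < lam)
    (hζ : ContDiff ℝ (m : ℕ∞) ζ)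
    (hdet : ∀ θ ∈ Set.Icc (0 : ℝ) 1, ∀ x : Rd d,
      lam ≤ |(ContinuousLinearMap.id ℝ (Rd d) + θ • fderiv ℝ ζ x).det|)
    (h1 : Function.LeftInverse ι (fun x => x + ζ x))
    (h2 : Function.RightInverse ι (fun x => x + ζ x)) (x : Rd d) :
    (fderiv ℝ ι x).det = ((Bmap ζ (ι x)).det)⁻¹ := by
  rw [(iota_facts hm hlam hζ hdet h1 h2 x).2]
  rw [ContinuousLinearEquiv.det_coe_symm, cleOf_coe]

end iota

/-- norm of iterated derivative ignores an added constant (n ≥ 1) -/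
lemma norm_iteratedFDeriv_const_add {E F : Type*} [NormedAddCommGroup E] [NormedSpace ℝ E]
    [NormedAddCommGroup F] [NormedSpace ℝ F] {f : E → F} {n : ℕ}
    (hf : ContDiff ℝ (n : ℕ∞) f) (hn : n ≠ 0) (c : F) (x : E) :
    ‖iteratedFDeriv ℝ n (fun y => c + f y) x‖ = ‖iteratedFDeriv ℝ n f x‖ := by
  have h1 : (fun y => c + f y) = (fun _ => c) + f := rfl
  rw [h1, iteratedFDeriv_add_apply contDiff_const.contDiffAt (by exact_mod_cast hf.contDiffAt),
    iteratedFDeriv_const_of_ne hn]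
  simp

lemma norm_fderiv_eq (ζ : Rd d → Rd d) (y : Rd d) :
    ‖fderiv ℝ ζ y‖ = ‖iteratedFDeriv ℝ 1 ζ y‖ := by
  rw [← norm_iteratedFDeriv_fderiv, norm_iteratedFDeriv_zero]

section iotabounds

variable (d) (m : ℕ) (lam Mm : ℝ)

/-- the compact set of linear maps where inverses live -/
def Kset : Set (Rd d →L[ℝ] Rd d) := {A | ‖A‖ ≤ 1 + Mm ∧ lam ≤ A.det}

lemma Kset_isCompact : IsCompact (Kset d lam Mm) := by
  haveI : ProperSpace (Rd d →L[ℝ] Rd d) := FiniteDimensional.proper ℝ _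
  have hclosed : IsClosed (Kset d lam Mm) := by
    refine (isClosed_le continuous_norm continuous_const).inter
      (isClosed_le continuous_const ContinuousLinearMap.continuous_det)
  refine IsCompact.of_isClosed_subset (isCompact_closedBall 0 (1 + Mm)) hclosed ?_
  intro A hA
  simpa [Metric.mem_closedBall, dist_eq_norm] using hA.1

lemma Kset_subset_units (hlam : 0 < lam) :
    Kset d lam Mm ⊆ {A : Rd d →L[ℝ] Rd d | IsUnit A} := by
  intro A hA
  have hne : A.det ≠ 0 := ne_of_gt (lt_of_lt_of_le hlam hA.2)
  set e := cleOf A hne with he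
  refine ⟨⟨A, (e.symm : Rd d →L[ℝ] Rd d), ?_, ?_⟩, rfl⟩
  · rw [← cleOf_coe A hne]; ext z; simp [ContinuousLinearMap.mul_apply, he]
  · rw [← cleOf_coe A hne]; ext z; simp [ContinuousLinearMap.mul_apply, he]

lemma ring_inverse_contDiffOn'' (n : WithTop ℕ∞) :
    ContDiffOn ℝ n (Ring.inverse : (Rd d →L[ℝ] Rd d) → (Rd d →L[ℝ] Rd d))
      {A : Rd d →L[ℝ] Rd d | IsUnit A} := by
  intro A hA
  have h := contDiffAt_ringInverse (𝕜 := ℝ) (n := n) (hA.unit)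
  rw [IsUnit.unit_spec] at h
  exact h.contDiffWithinAt

lemma ring_inverse_contDiffOn :
    ContDiffOn ℝ (⊤ : ℕ∞) (Ring.inverse : (Rd d →L[ℝ] Rd d) → (Rd d →L[ℝ] Rd d))
      {A : Rd d →L[ℝ] Rd d | IsUnit A} := ring_inverse_contDiffOn'' d _

lemma ring_inverse_contDiffOn' (d : ℕ) (n : WithTop ℕ∞) :
    ContDiffOn ℝ n (Ring.inverse : (Rd d →L[ℝ] Rd d) → (Rd d →L[ℝ] Rd d))
      {A : Rd d →L[ℝ] Rd d | IsUnit A} := ring_inverse_contDiffOn'' d n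

end iotabounds

section mainbounds

variable {m : ℕ} {lam Mm : ℝ}

/-- hypothesis bundle -/
def Hyp (d m : ℕ) (lam Mm : ℝ) (ζ ι : Rd d → Rd d) : Prop :=
  ContDiff ℝ (m : ℕ∞) ζ ∧
  (∀ θ ∈ Set.Icc (0 : ℝ) 1, ∀ x : Rd d,
    lam ≤ |(ContinuousLinearMap.id ℝ (Rd d) + θ • fderiv ℝ ζ x).det|) ∧
  (∀ k ≤ m, ∀ x : Rd d, ‖iteratedFDeriv ℝ k ζ x‖ ≤ Mm) ∧
  Function.LeftInverse ι (fun x => x + ζ x) ∧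
  Function.RightInverse ι (fun x => x + ζ x)

lemma Mm_nonneg {d m : ℕ} {lam Mm : ℝ} {ζ ι : Rd d → Rd d} (H : Hyp d m lam Mm ζ ι) :
    0 ≤ Mm :=
  le_trans (norm_nonneg _) (H.2.2.1 0 (Nat.zero_le m) 0)

lemma Bmap_mem_Kset {d m : ℕ} {lam Mm : ℝ} {ζ ι : Rd d → Rd d} (hm : 1 ≤ m) (hlam : 0 < lam)
    (H : Hyp d m lam Mm ζ ι) (y : Rd d) : Bmap ζ y ∈ Kset d lam Mm := by
  obtain ⟨hζ, hdet, hM, h1, h2⟩ := H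
  constructor
  · refine le_trans (norm_add_le _ _) ?_
    have h1' : ‖ContinuousLinearMap.id ℝ (Rd d)‖ ≤ 1 := ContinuousLinearMap.norm_id_le
    have h2' : ‖fderiv ℝ ζ y‖ ≤ Mm := by
      rw [norm_fderiv_eq]; exact hM 1 hm y
    linarith
  · exact det_Bmap_ge hlam hdet y

/-- main inductive bound on the derivatives of ι -/
lemma iota_derivs_bound (d m : ℕ) (hm : 1 ≤ m) (lam Mm : ℝ) (hlam : 0 < lam) :
    ∃ R : ℝ, 1 ≤ R ∧ ∀ ζ ι : Rd d → Rd d, Hyp d m lam Mm ζ ι →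
      ∀ j, 1 ≤ j → j ≤ m → ∀ x : Rd d, ‖iteratedFDeriv ℝ j ι x‖ ≤ R := by
  obtain ⟨CK, hCK0, hCK⟩ := bound_on_compact (Units.isOpen) (ring_inverse_contDiffOn d)
    (Kset_isCompact d lam Mm) (Kset_subset_units d lam Mm hlam) m
  -- cumulative induction
  suffices h : ∀ i : ℕ, i ≤ m → ∃ R : ℝ, 1 ≤ R ∧ ∀ ζ ι : Rd d → Rd d, Hyp d m lam Mm ζ ι →
      ∀ j, 1 ≤ j → j ≤ i → ∀ x : Rd d, ‖iteratedFDeriv ℝ j ι x‖ ≤ R by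
    obtain ⟨R, hR1, hR⟩ := h m le_rfl
    exact ⟨R, hR1, hR⟩
  intro i
  induction i with
  | zero => exact fun _ => ⟨1, le_rfl, fun ζ ι H j hj1 hj0 x => absurd (hj1.trans hj0) (by omega)⟩
  | succ i IH =>
    intro him
    obtain ⟨R, hR1, hR⟩ := IH (le_trans (Nat.le_succ i) him)
    -- new bound for the (i+1)-st derivative
    by_cases hi0 : i = 0
    · -- base case : j = 1 : first derivative bound
      subst hi0
      refine ⟨max R (max 1 CK), le_trans hR1 (le_max_left _ _), ?_⟩
      intro ζ ι H j hj1 hj2 x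
      interval_cases j
      have hfd := fderiv_iota hm hlam H.1 H.2.1 H.2.2.2.1 H.2.2.2.2 x
      have hmem := Bmap_mem_Kset hm hlam H (ι x)
      have : ‖iteratedFDeriv ℝ 1 ι x‖ = ‖Ring.inverse (Bmap ζ (ι x))‖ := by
        rw [← norm_fderiv_eq, hfd]
      rw [this]
      have := hCK 0 (Nat.zero_le m) _ hmem
      rw [norm_iteratedFDerivWithin_zero] at this
      exact this.trans (le_trans (le_max_right 1 CK) (le_max_right _ _))
    · -- inductive step: bound the (i+1)-st derivative via the composition formula
      set E0 : ℝ := (m.factorial : ℝ) * (max 1 Mm) * R ^ m with hE0def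
      have hE01 : 1 ≤ E0 := by
        have h1 : (1 : ℝ) ≤ (m.factorial : ℝ) := by exact_mod_cast m.factorial_pos
        have h2 : (1 : ℝ) ≤ max 1 Mm := le_max_left _ _
        have h3 : (1 : ℝ) ≤ R ^ m := one_le_pow₀ hR1
        have hab : (1 : ℝ) ≤ (m.factorial : ℝ) * (max 1 Mm) := by
          nlinarith [mul_le_mul h1 h2 zero_le_one (le_trans zero_le_one h1)]
        rw [hE0def]
        nlinarith [mul_le_mul hab h3 zero_le_one (le_trans zero_le_one hab)]
      set Rnew : ℝ := (i.factorial : ℝ) * CK * E0 ^ i with hRnewdef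
      refine ⟨max R (max 1 Rnew), le_trans hR1 (le_max_left _ _), ?_⟩
      intro ζ ι H j hj1 hj2 x
      rcases Nat.lt_succ_iff_lt_or_eq.mp (Nat.lt_succ_of_le hj2) with hj | hj
      · exact le_trans (hR ζ ι H j hj1 (by omega) x) (le_max_left _ _)
      · subst hj
        obtain ⟨hζ, hdet, hM, h1, h2⟩ := H
        have hι : ContDiff ℝ (m : ℕ∞) ι := iota_contDiff hm hlam hζ hdet h1 h2
        have hm1le : ((m - 1 : ℕ) : WithTop ℕ∞) + 1 ≤ ((m : ℕ∞) : WithTop ℕ∞) := by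
          have heq : (m - 1) + 1 = m := Nat.succ_pred_eq_of_pos hm
          refine le_of_eq ?_
          calc ((m - 1 : ℕ) : WithTop ℕ∞) + 1 = (((m - 1) + 1 : ℕ) : WithTop ℕ∞) := by
                push_cast; ring
            _ = ((m : ℕ∞) : WithTop ℕ∞) := by rw [heq]; norm_cast
        have hm1le' : ((m - 1 : ℕ) : ℕ∞) ≤ (m : ℕ∞) := by norm_cast; omega
        have hfdζ : ContDiff ℝ ((m - 1 : ℕ) : ℕ∞) (fderiv ℝ ζ) := hζ.fderiv_right hm1le
        have hι' : ContDiff ℝ ((m - 1 : ℕ) : ℕ∞) ι := hι.of_le (by exact_mod_cast hm1le')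
        set f : Rd d → (Rd d →L[ℝ] Rd d) := fun y => Bmap ζ (ι y) with hfdef
        have hfcd : ContDiff ℝ ((m - 1 : ℕ) : ℕ∞) f := by
          have : f = fun y => ContinuousLinearMap.id ℝ (Rd d) + fderiv ℝ ζ (ι y) := rfl
          rw [this]
          exact contDiff_const.add (hfdζ.comp hι')
        have hfun : fderiv ℝ ι = Ring.inverse ∘ f :=
          funext fun y => fderiv_iota hm hlam hζ hdet h1 h2 y
        have hnorm : ‖iteratedFDeriv ℝ (i + 1) ι x‖ = ‖iteratedFDeriv ℝ i (Ring.inverse ∘ f) x‖ := by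
          rw [← norm_iteratedFDeriv_fderiv, hfun]
        rw [hnorm]
        have hmain : ‖iteratedFDerivWithin ℝ i (Ring.inverse ∘ f) Set.univ x‖ ≤
            (i.factorial : ℝ) * CK * E0 ^ i := by
          refine norm_iteratedFDerivWithin_comp_le (t := {A : Rd d →L[ℝ] Rd d | IsUnit A})
            (N := ((m - 1 : ℕ) : WithTop ℕ∞))
            (ring_inverse_contDiffOn' d _) hfcd.contDiffOn (by exact_mod_cast Nat.le_sub_one_of_lt him)
            Units.isOpen.uniqueDiffOn uniqueDiffOn_univ ?_ (Set.mem_univ x) ?_ ?_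
          · intro y _
            exact Kset_subset_units d lam Mm hlam
              (Bmap_mem_Kset hm hlam ⟨hζ, hdet, hM, h1, h2⟩ (ι y))
          · intro r hr
            exact hCK r (by omega) _
              (Bmap_mem_Kset hm hlam ⟨hζ, hdet, hM, h1, h2⟩ (ι x))
          · intro j' hj'1 hj'2
            rw [iteratedFDerivWithin_univ]
            have hj'm : j' ≤ m - 1 := by omega
            have hgoal : ‖iteratedFDeriv ℝ j' f x‖ =
                ‖iteratedFDeriv ℝ j' (fun y => fderiv ℝ ζ (ι y)) x‖ := by
              refine norm_iteratedFDeriv_const_add ?_ (by omega) _ x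
              exact (hfdζ.comp hι').of_le (by exact_mod_cast hj'm)
            rw [hgoal]
            have hcomp : ‖iteratedFDeriv ℝ j' ((fderiv ℝ ζ) ∘ ι) x‖ ≤
                (j'.factorial : ℝ) * (max 1 Mm) * R ^ j' := by
              refine norm_iteratedFDeriv_comp_le (N := ((m - 1 : ℕ) : WithTop ℕ∞))
                hfdζ hι' (by exact_mod_cast hj'm) x ?_ ?_
              · intro s hs
                rw [norm_iteratedFDeriv_fderiv]
                exact le_trans (hM (s + 1) (by omega) (ι x)) (le_max_right _ _)
              · intro l hl1 hl2
                refine le_trans (hR ζ ι ⟨hζ, hdet, hM, h1, h2⟩ l hl1 (by omega) x) ?_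
                exact le_self_pow₀ hR1 (by omega)
            refine le_trans hcomp ?_
            have h1' : (j'.factorial : ℝ) ≤ (m.factorial : ℝ) := by
              exact_mod_cast Nat.factorial_le (by omega)
            have h2' : R ^ j' ≤ R ^ m := pow_le_pow_right₀ hR1 (by omega)
            have hEj : E0 ≤ E0 ^ j' := le_self_pow₀ hE01 (by omega)
            refine le_trans ?_ hEj
            rw [hE0def]
            have hmax1 : (0:ℝ) < max 1 Mm := lt_of_lt_of_le one_pos (le_max_left _ _)
            have hfac : (0:ℝ) < (j'.factorial : ℝ) := by exact_mod_cast j'.factorial_pos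
            have hRj : (0:ℝ) < R ^ j' := lt_of_lt_of_le one_pos (one_le_pow₀ hR1)
            calc (j'.factorial : ℝ) * (max 1 Mm) * R ^ j'
                ≤ (m.factorial : ℝ) * (max 1 Mm) * R ^ j' := by
                  apply mul_le_mul_of_nonneg_right (mul_le_mul_of_nonneg_right h1' hmax1.le) hRj.le
              _ ≤ (m.factorial : ℝ) * (max 1 Mm) * R ^ m := by
                  apply mul_le_mul_of_nonneg_left h2'
                  positivity
        rw [← iteratedFDerivWithin_univ]
        exact le_trans hmain (le_trans (le_max_right 1 Rnew) (le_max_right _ _))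

end mainbounds

section vbound
set_option maxHeartbeats 2000000

/-- Linear-in-C bound for derivatives of `y ↦ 1 - det(B(ι y))`. -/
lemma v_bound (d m : ℕ) (hm : 1 ≤ m) (lam Mm : ℝ) (hlam : 0 < lam) (k : ℕ) (hk : k ≤ m - 1) :
    ∃ Av : ℝ, 0 ≤ Av ∧ ∀ ζ ι : Rd d → Rd d, Hyp d m lam Mm ζ ι →
      ∀ C' : ℝ, 0 ≤ C' → C' ≤ Mm →
      (∀ j, 1 ≤ j → j ≤ k + 1 → ∀ x : Rd d, ‖iteratedFDeriv ℝ j ζ x‖ ≤ C') →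
      ∀ i ≤ k, ∀ x : Rd d,
        ‖iteratedFDeriv ℝ i (fun y => 1 - (Bmap ζ (ι y)).det) x‖ ≤ Av * C' := by
  classical
  obtain ⟨R, hR1, hR⟩ := iota_derivs_bound d m hm lam Mm hlam
  -- Lipschitz constant of det on a large ball
  set ρ : ℝ := 2 + max 0 Mm with hρdef
  have hρ0 : 0 ≤ ρ := by positivity
  obtain ⟨L, hL0, hL⟩ := bound_on_compact' (contDiff_det (d := d))
    (isCompact_closedBall (0 : Rd d →L[ℝ] Rd d) ρ) 1
  -- constants for the i ≥ 1 case
  set A2 : ℝ := (k.factorial : ℝ) * R ^ k with hA2def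
  have hA20 : 0 ≤ A2 := by positivity
  have hA21 : 1 ≤ A2 := by
    have h1 : (1:ℝ) ≤ (k.factorial : ℝ) := by exact_mod_cast k.factorial_pos
    have h2 : (1:ℝ) ≤ R ^ k := one_le_pow₀ hR1
    nlinarith
  set M' : ℝ := max (1 + max 0 Mm) (A2 * max 0 Mm) with hM'def
  have hM'0 : 0 ≤ M' := le_trans (by positivity) (le_max_left _ _)
  set Stot : ℝ := ∑ i ∈ Finset.range (k + 1),
    ∑ pm ∈ (Finset.univ : Finset (Fin d)).sym i, ((pm : Multiset (Fin d)).countPerms : ℝ)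
    with hStotdef
  have hStot0 : 0 ≤ Stot := Finset.sum_nonneg fun _ _ => Finset.sum_nonneg fun _ _ => by positivity
  set Perms : ℝ := (Fintype.card (Equiv.Perm (Fin d)) : ℝ) with hPermsdef
  have hPerms0 : 0 ≤ Perms := by positivity
  refine ⟨max L (Perms * Stot * (A2 * M' ^ (d - 1))), le_trans hL0 (le_max_left _ _), ?_⟩
  intro ζ ι H C' hC'0 hC'Mm hC' i hik x
  obtain ⟨hζ, hdet, hM, h1, h2⟩ := H
  have hMm0 : 0 ≤ Mm := Mm_nonneg (m := m) ⟨hζ, hdet, hM, h1, h2⟩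
  have hι : ContDiff ℝ (m : ℕ∞) ι := iota_contDiff hm hlam hζ hdet h1 h2
  have hm1le : ((m - 1 : ℕ) : WithTop ℕ∞) + 1 ≤ ((m : ℕ∞) : WithTop ℕ∞) := by
    have heq : (m - 1) + 1 = m := Nat.succ_pred_eq_of_pos hm
    refine le_of_eq ?_
    calc ((m - 1 : ℕ) : WithTop ℕ∞) + 1 = (((m - 1) + 1 : ℕ) : WithTop ℕ∞) := by push_cast; ring
      _ = ((m : ℕ∞) : WithTop ℕ∞) := by rw [heq]; norm_cast
  have hm1le' : ((m - 1 : ℕ) : ℕ∞) ≤ (m : ℕ∞) := by norm_cast; omega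
  have hfdζ : ContDiff ℝ ((m - 1 : ℕ) : ℕ∞) (fderiv ℝ ζ) := hζ.fderiv_right hm1le
  have hι' : ContDiff ℝ ((m - 1 : ℕ) : ℕ∞) ι := hι.of_le (by exact_mod_cast hm1le')
  set f : Rd d → (Rd d →L[ℝ] Rd d) := fun y => Bmap ζ (ι y) with hfdef
  have hfcd : ContDiff ℝ ((m - 1 : ℕ) : ℕ∞) f := by
    have : f = fun y => ContinuousLinearMap.id ℝ (Rd d) + fderiv ℝ ζ (ι y) := rfl
    rw [this]
    exact contDiff_const.add (hfdζ.comp hι')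
  have hfnorm : ∀ y, ‖f y‖ ≤ 1 + Mm := by
    intro y
    refine le_trans (norm_add_le _ _) ?_
    have ha : ‖ContinuousLinearMap.id ℝ (Rd d)‖ ≤ 1 := ContinuousLinearMap.norm_id_le
    have hb : ‖fderiv ℝ ζ (ι y)‖ ≤ Mm := by
      rw [norm_fderiv_eq]; exact hM 1 hm (ι y)
    linarith
  -- bound on derivatives of f of order c ≥ 1 : ≤ (c! * C' * R^c) ≤ A2 * C'
  have hfd_bound : ∀ c, 1 ≤ c → c ≤ k → ∀ y : Rd d,
      ‖iteratedFDeriv ℝ c f y‖ ≤ A2 * C' := by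
    intro c hc1 hck y
    have hcm1 : c ≤ m - 1 := le_trans hck hk
    have heq : ‖iteratedFDeriv ℝ c f y‖ =
        ‖iteratedFDeriv ℝ c (fun z => fderiv ℝ ζ (ι z)) y‖ := by
      refine norm_iteratedFDeriv_const_add ?_ (by omega) _ y
      exact (hfdζ.comp hι').of_le (by exact_mod_cast hcm1)
    rw [heq]
    have hcomp : ‖iteratedFDeriv ℝ c ((fderiv ℝ ζ) ∘ ι) y‖ ≤
        (c.factorial : ℝ) * C' * R ^ c := by
      refine norm_iteratedFDeriv_comp_le (N := ((m - 1 : ℕ) : WithTop ℕ∞))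
        hfdζ hι' (by exact_mod_cast hcm1) y ?_ ?_
      · intro s hs
        rw [norm_iteratedFDeriv_fderiv]
        exact hC' (s + 1) (by omega) (by omega) (ι y)
      · intro l hl1 hl2
        refine le_trans (hR ζ ι ⟨hζ, hdet, hM, h1, h2⟩ l hl1 (by omega) y) ?_
        exact le_self_pow₀ hR1 (by omega)
    refine le_trans hcomp ?_
    rw [hA2def]
    have hf1 : (c.factorial : ℝ) ≤ (k.factorial : ℝ) := by
      exact_mod_cast Nat.factorial_le hck
    have hf2 : R ^ c ≤ R ^ k := pow_le_pow_right₀ hR1 hck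
    calc (c.factorial : ℝ) * C' * R ^ c ≤ (k.factorial : ℝ) * C' * R ^ c := by
          apply mul_le_mul_of_nonneg_right (mul_le_mul_of_nonneg_right hf1 hC'0) (by positivity)
      _ ≤ (k.factorial : ℝ) * C' * R ^ k := by
          apply mul_le_mul_of_nonneg_left hf2 (by positivity)
      _ = (k.factorial : ℝ) * R ^ k * C' := by ring
  rcases Nat.eq_zero_or_pos i with hi0 | hi1
  · -- zeroth derivative : Lipschitz estimate on det
    subst hi0
    rw [norm_iteratedFDeriv_zero]
    have hdiff : ∀ z ∈ Metric.closedBall (0 : Rd d →L[ℝ] Rd d) ρ,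
        DifferentiableAt ℝ (fun A : Rd d →L[ℝ] Rd d => A.det) z := fun z _ =>
      (contDiff_det.differentiable (by simp)).differentiableAt
    have hbd : ∀ z ∈ Metric.closedBall (0 : Rd d →L[ℝ] Rd d) ρ,
        ‖fderiv ℝ (fun A : Rd d →L[ℝ] Rd d => A.det) z‖ ≤ L := by
      intro z hz
      have := hL 1 le_rfl z hz
      rwa [← norm_iteratedFDeriv_fderiv, norm_iteratedFDeriv_zero] at this
    have hmem1 : ContinuousLinearMap.id ℝ (Rd d) ∈
        Metric.closedBall (0 : Rd d →L[ℝ] Rd d) ρ := by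
      rw [Metric.mem_closedBall, dist_eq_norm, sub_zero]
      calc ‖ContinuousLinearMap.id ℝ (Rd d)‖ ≤ 1 := ContinuousLinearMap.norm_id_le
        _ ≤ ρ := by
            rw [hρdef]
            have : (0:ℝ) ≤ max 0 Mm := le_max_left _ _
            linarith
    have hmem2 : f x ∈ Metric.closedBall (0 : Rd d →L[ℝ] Rd d) ρ := by
      rw [Metric.mem_closedBall, dist_eq_norm, sub_zero]
      refine le_trans (hfnorm x) ?_
      rw [hρdef]
      have : Mm ≤ max 0 Mm := le_max_right _ _
      linarith
    have hlip := (convex_closedBall (0 : Rd d →L[ℝ] Rd d) ρ).norm_image_sub_le_of_norm_fderiv_le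
      hdiff hbd hmem2 hmem1
    have hdetid : (ContinuousLinearMap.id ℝ (Rd d)).det = 1 := by
      simp [ContinuousLinearMap.det, ContinuousLinearMap.coe_id, LinearMap.det_id]
    have hsub : ‖ContinuousLinearMap.id ℝ (Rd d) - f x‖ = ‖fderiv ℝ ζ (ι x)‖ := by
      have : ContinuousLinearMap.id ℝ (Rd d) - f x = -(fderiv ℝ ζ (ι x)) := by
        rw [hfdef]; simp only [Bmap]; abel
      rw [this, norm_neg]
    rw [hdetid, hsub] at hlip
    have hC1 : ‖fderiv ℝ ζ (ι x)‖ ≤ C' := by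
      rw [norm_fderiv_eq]; exact hC' 1 le_rfl (by omega) (ι x)
    have hfx : f x = Bmap ζ (ι x) := rfl
    rw [← hfx]
    calc ‖(1:ℝ) - (f x).det‖ ≤ L * ‖fderiv ℝ ζ (ι x)‖ := hlip
      _ ≤ L * C' := mul_le_mul_of_nonneg_left hC1 hL0
      _ ≤ max L (Perms * Stot * (A2 * M' ^ (d - 1))) * C' :=
          mul_le_mul_of_nonneg_right (le_max_left _ _) hC'0
  · -- higher derivatives : product expansion of the determinant
    have hikm : i ≤ m - 1 := le_trans hik hk
    have hTop : ∀ n : ℕ, ((n : ℕ∞) : WithTop ℕ∞) ≤ ((⊤ : ℕ∞) : WithTop ℕ∞) :=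
      fun n => WithTop.coe_le_coe.2 le_top
    have hdet' : ContDiff ℝ ((m - 1 : ℕ) : ℕ∞) (fun A : Rd d →L[ℝ] Rd d => A.det) :=
      contDiff_det.of_le (hTop (m - 1))
    have hucd : ContDiff ℝ ((m - 1 : ℕ) : ℕ∞) (fun y => (f y).det) := hdet'.comp hfcd
    -- reduce to the derivative of u
    have hred : ‖iteratedFDeriv ℝ i (fun y => 1 - (Bmap ζ (ι y)).det) x‖ =
        ‖iteratedFDeriv ℝ i (fun y => (f y).det) x‖ := by
      have he1 : (fun y : Rd d => 1 - (Bmap ζ (ι y)).det) =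
          (fun y : Rd d => (1 : ℝ) + -((f y).det)) := by
        funext y; rw [hfdef]; ring
      rw [he1, norm_iteratedFDeriv_const_add (hucd.neg.of_le (by exact_mod_cast hikm))
        (by omega) _ x]
      have he2 : iteratedFDeriv ℝ i (fun y => -((f y).det)) x =
          -(iteratedFDeriv ℝ i (fun y => (f y).det) x) := iteratedFDeriv_neg_apply
      rw [he2, norm_neg]
    rw [hred]
    -- expand the determinant as a sum over permutations
    have hgexp : (fun y => (f y).det) = (fun y => ∑ σ : Equiv.Perm (Fin d),
        ((Equiv.Perm.sign σ : ℤ) : ℝ) * ∏ p : Fin d, ent (σ p) p (f y)) :=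
      funext fun y => det_expand (f y)
    have ha_cd : ∀ (p q : Fin d), ContDiff ℝ ((m - 1 : ℕ) : ℕ∞) (fun y => ent p q (f y)) :=
      fun p q => (ent p q).contDiff.comp hfcd
    have hterm_cd : ∀ σ : Equiv.Perm (Fin d), ContDiff ℝ ((m - 1 : ℕ) : ℕ∞)
        (fun y => ((Equiv.Perm.sign σ : ℤ) : ℝ) * ∏ p : Fin d, ent (σ p) p (f y)) :=
      fun σ => contDiff_const.mul (contDiff_prod (fun p _ => ha_cd (σ p) p))
    rw [hgexp]
    have hsum0 := iteratedFDeriv_sum (𝕜 := ℝ) (u := (Finset.univ : Finset (Equiv.Perm (Fin d))))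
      (f := fun σ (y : Rd d) => ((Equiv.Perm.sign σ : ℤ) : ℝ) * ∏ p : Fin d, ent (σ p) p (f y))
      (i := i) (fun σ _ => (hterm_cd σ).of_le (by exact_mod_cast hikm))
    have hsum : iteratedFDeriv ℝ i (fun y => ∑ σ : Equiv.Perm (Fin d),
        ((Equiv.Perm.sign σ : ℤ) : ℝ) * ∏ p : Fin d, ent (σ p) p (f y)) x =
        ∑ σ : Equiv.Perm (Fin d), iteratedFDeriv ℝ i
          (fun y => ((Equiv.Perm.sign σ : ℤ) : ℝ) * ∏ p : Fin d, ent (σ p) p (f y)) x := by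
      have := congrFun hsum0 x
      simpa [Finset.sum_apply] using this
    rw [hsum]
    refine le_trans (norm_sum_le _ _) ?_
    -- bound each permutation term
    have hperm : ∀ σ : Equiv.Perm (Fin d),
        ‖iteratedFDeriv ℝ i (fun y => ((Equiv.Perm.sign σ : ℤ) : ℝ) *
          ∏ p : Fin d, ent (σ p) p (f y)) x‖ ≤ Stot * (A2 * M' ^ (d - 1) * C') := by
      intro σ
      -- remove the sign
      have hsgn : ‖iteratedFDeriv ℝ i (fun y => ((Equiv.Perm.sign σ : ℤ) : ℝ) *
          ∏ p : Fin d, ent (σ p) p (f y)) x‖ =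
          ‖iteratedFDeriv ℝ i (fun y => ∏ p : Fin d, ent (σ p) p (f y)) x‖ := by
        have he : (fun y => ((Equiv.Perm.sign σ : ℤ) : ℝ) * ∏ p : Fin d, ent (σ p) p (f y)) =
            (((Equiv.Perm.sign σ : ℤ) : ℝ) • (fun y => ∏ p : Fin d, ent (σ p) p (f y))) := by
          funext y; simp [smul_eq_mul]
        rw [he, iteratedFDeriv_const_smul_apply
          (((contDiff_prod (fun p _ => ha_cd (σ p) p)).of_le (by exact_mod_cast hikm)).contDiffAt),
          norm_smul]
        have habs : ‖((Equiv.Perm.sign σ : ℤ) : ℝ)‖ = 1 := by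
          rcases Int.units_eq_one_or (Equiv.Perm.sign σ) with h | h <;> rw [h] <;> simp
        rw [habs, one_mul]
      rw [hsgn]
      have hprod := norm_iteratedFDeriv_prod_le (𝕜 := ℝ) (A' := ℝ)
        (u := (Finset.univ : Finset (Fin d))) (f := fun p => fun y => ent (σ p) p (f y))
        (N := ((m - 1 : ℕ) : WithTop ℕ∞)) (fun p _ => ha_cd (σ p) p) (x := x)
        (by exact_mod_cast hikm)
      refine le_trans hprod ?_
      -- bound each multiset term
      have hX0 : 0 ≤ A2 * M' ^ (d - 1) * C' := by positivity
      have hpm_bound : ∀ pm ∈ (Finset.univ : Finset (Fin d)).sym i,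
          ((pm : Multiset (Fin d)).countPerms : ℝ) *
            ∏ p : Fin d, ‖iteratedFDeriv ℝ ((pm : Multiset (Fin d)).count p)
              (fun y => ent (σ p) p (f y)) x‖ ≤
          ((pm : Multiset (Fin d)).countPerms : ℝ) * (A2 * M' ^ (d - 1) * C') := by
        intro pm _
        refine mul_le_mul_of_nonneg_left ?_ (by positivity)
        -- find an index with positive count
        have hcard : (pm : Multiset (Fin d)).card = i := pm.2
        have hne : (pm : Multiset (Fin d)) ≠ 0 := by
          intro h0
          rw [h0] at hcard
          simp at hcard
          omega
        obtain ⟨j₀, hj₀⟩ := Multiset.exists_mem_of_ne_zero hne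
        have hcnt : 1 ≤ (pm : Multiset (Fin d)).count j₀ := by
          rwa [Multiset.one_le_count_iff_mem]
        set b : Fin d → ℝ := fun p => if p = j₀ then A2 * C' else M' with hbdef
        have hfactor : ∀ p : Fin d,
            ‖iteratedFDeriv ℝ ((pm : Multiset (Fin d)).count p)
              (fun y => ent (σ p) p (f y)) x‖ ≤ b p := by
          intro p
          have hent1 : ‖ent (σ p) p‖ ≤ 1 := by
            refine (ent (σ p) p).opNorm_le_bound zero_le_one (fun A => ?_)
            rw [one_mul]; exact norm_ent_apply_le (σ p) p A
          have hcle : (pm : Multiset (Fin d)).count p ≤ i :=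
            le_of_le_of_eq (Multiset.count_le_card _ _) hcard
          have hgen : ∀ c : ℕ, 1 ≤ c → c ≤ i →
              ‖iteratedFDeriv ℝ c (fun y => ent (σ p) p (f y)) x‖ ≤ A2 * C' := by
            intro c hc1 hci
            have hcomp : (fun y => ent (σ p) p (f y)) = (ent (σ p) p) ∘ f := rfl
            rw [hcomp, (ent (σ p) p).iteratedFDeriv_comp_left (hfcd.contDiffAt (x := x))
              (by exact_mod_cast le_trans hci hikm)]
            refine le_trans ((ent (σ p) p).norm_compContinuousMultilinearMap_le _) ?_
            have := hfd_bound c hc1 (le_trans hci hik) x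
            calc ‖ent (σ p) p‖ * ‖iteratedFDeriv ℝ c f x‖
                ≤ 1 * ‖iteratedFDeriv ℝ c f x‖ :=
                  mul_le_mul_of_nonneg_right hent1 (norm_nonneg _)
              _ = ‖iteratedFDeriv ℝ c f x‖ := one_mul _
              _ ≤ A2 * C' := this
          rcases Nat.eq_zero_or_pos ((pm : Multiset (Fin d)).count p) with hc0 | hc1
          · -- zero count : just the sup bound on the entry
            rw [hc0, norm_iteratedFDeriv_zero]
            have : ‖ent (σ p) p (f x)‖ ≤ 1 + Mm :=
              le_trans (norm_ent_apply_le (σ p) p (f x)) (hfnorm x)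
            have hbp : 1 + Mm ≤ b p := by
              simp only [hbdef]
              rcases eq_or_ne p j₀ with h | h
              · -- impossible-free : if p = j₀ then count ≥ 1 contradicts count = 0
                exfalso
                rw [h] at hc0
                omega
              · rw [if_neg h]
                refine le_trans ?_ (le_max_left _ _)
                have : Mm ≤ max 0 Mm := le_max_right _ _
                linarith
            exact le_trans this hbp
          · have hle := hgen _ hc1 hcle
            refine le_trans hle ?_
            simp only [hbdef]
            rcases eq_or_ne p j₀ with h | h
            · rw [if_pos h]
            · rw [if_neg h]
              calc A2 * C' ≤ A2 * Mm := mul_le_mul_of_nonneg_left hC'Mm hA20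
                _ = A2 * max 0 Mm := by rw [max_eq_right hMm0]
                _ ≤ M' := le_max_right _ _
        have hprodle : ∏ p : Fin d, ‖iteratedFDeriv ℝ ((pm : Multiset (Fin d)).count p)
            (fun y => ent (σ p) p (f y)) x‖ ≤ ∏ p : Fin d, b p :=
          Finset.prod_le_prod (fun p _ => norm_nonneg _) (fun p _ => hfactor p)
        refine le_trans hprodle ?_
        have hbprod : ∏ p : Fin d, b p = (A2 * C') * M' ^ (d - 1) := by
          rw [← Finset.mul_prod_erase Finset.univ b (Finset.mem_univ j₀)]
          have hbj : b j₀ = A2 * C' := by simp [hbdef]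
          have hrest : ∏ p ∈ Finset.univ.erase j₀, b p = M' ^ (d - 1) := by
            have : ∀ p ∈ Finset.univ.erase j₀, b p = M' := by
              intro p hp
              simp only [hbdef]
              exact if_neg (Finset.ne_of_mem_erase hp)
            rw [Finset.prod_congr rfl this, Finset.prod_const,
              Finset.card_erase_of_mem (Finset.mem_univ j₀), Finset.card_univ,
              Fintype.card_fin]
          rw [hbj, hrest]
        rw [hbprod]
        refine le_of_eq ?_
        ring
      refine le_trans (Finset.sum_le_sum hpm_bound) ?_
      rw [← Finset.sum_mul]
      refine mul_le_mul_of_nonneg_right ?_ hX0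
      rw [hStotdef]
      refine Finset.single_le_sum (f := fun i => ∑ pm ∈ (Finset.univ : Finset (Fin d)).sym i,
        ((pm : Multiset (Fin d)).countPerms : ℝ)) ?_ (Finset.mem_range.2 (by omega))
      intro l _
      exact Finset.sum_nonneg fun _ _ => by positivity
    refine le_trans (Finset.sum_le_sum (fun σ _ => hperm σ)) ?_
    rw [Finset.sum_const, Finset.card_univ]
    rw [nsmul_eq_mul]
    calc (Fintype.card (Equiv.Perm (Fin d)) : ℝ) * (Stot * (A2 * M' ^ (d - 1) * C'))
        = (Perms * Stot * (A2 * M' ^ (d - 1))) * C' := by rw [hPermsdef]; ring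
      _ ≤ max L (Perms * Stot * (A2 * M' ^ (d - 1))) * C' :=
          mul_le_mul_of_nonneg_right (le_max_right _ _) hC'0

end vbound

lemma w_bound (d m : ℕ) (hm : 1 ≤ m) (lam Mm : ℝ) (hlam : 0 < lam) (k : ℕ) (hk : k ≤ m - 1) :
    ∃ W : ℝ, 0 ≤ W ∧ ∀ ζ ι : Rd d → Rd d, Hyp d m lam Mm ζ ι →
      ∀ j ≤ k, ∀ x : Rd d,
        ‖iteratedFDeriv ℝ j (fun y => ((Bmap ζ (ι y)).det)⁻¹) x‖ ≤ W := by
  classical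
  obtain ⟨R, hR1, hR⟩ := iota_derivs_bound d m hm lam Mm hlam
  set ρ : ℝ := 1 + max 0 Mm with hρdef
  have hρ0 : 0 ≤ ρ := by positivity
  obtain ⟨Cdet, hCdet0, hCdet⟩ := bound_on_compact' (contDiff_det (d := d))
    (isCompact_closedBall (0 : Rd d →L[ℝ] Rd d) ρ) k
  -- upper bound for det on the ball
  have hUdet := hCdet 0 (Nat.zero_le k)
  -- inner bound data
  set E0 : ℝ := max 1 ((k.factorial : ℝ) * (max 1 Mm) * R ^ k) with hE0def
  have hE01 : 1 ≤ E0 := le_max_left _ _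
  set Bu : ℝ := (k.factorial : ℝ) * Cdet * E0 ^ k with hBudef
  set Du : ℝ := max 1 Bu with hDudef
  have hDu1 : 1 ≤ Du := le_max_left _ _
  -- inverse function bounds on the compact interval
  have hInv : ContDiffOn ℝ (⊤ : ℕ∞) (Inv.inv : ℝ → ℝ) (Set.Ioi (lam / 2)) := by
    intro t ht
    have hne : t ≠ 0 := ne_of_gt (lt_trans (half_pos hlam) ht)
    exact (contDiffAt_inv ℝ hne).contDiffWithinAt
  obtain ⟨CI, hCI0, hCI⟩ := bound_on_compact isOpen_Ioi hInv
    (isCompact_Icc (a := lam) (b := Cdet)) (fun z hz => lt_of_lt_of_le (half_lt_self hlam) hz.1) k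
  refine ⟨(k.factorial : ℝ) * CI * Du ^ k, by positivity, ?_⟩
  intro ζ ι H j hj x
  obtain ⟨hζ, hdet, hM, h1, h2⟩ := H
  have hMm0 : 0 ≤ Mm := Mm_nonneg (m := m) ⟨hζ, hdet, hM, h1, h2⟩
  have hι : ContDiff ℝ (m : ℕ∞) ι := iota_contDiff hm hlam hζ hdet h1 h2
  have hm1le : ((m - 1 : ℕ) : WithTop ℕ∞) + 1 ≤ ((m : ℕ∞) : WithTop ℕ∞) := by
    have heq : (m - 1) + 1 = m := Nat.succ_pred_eq_of_pos hm
    refine le_of_eq ?_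
    calc ((m - 1 : ℕ) : WithTop ℕ∞) + 1 = (((m - 1) + 1 : ℕ) : WithTop ℕ∞) := by push_cast; ring
      _ = ((m : ℕ∞) : WithTop ℕ∞) := by rw [heq]; norm_cast
  have hm1le' : ((m - 1 : ℕ) : ℕ∞) ≤ (m : ℕ∞) := by norm_cast; omega
  have hfdζ : ContDiff ℝ ((m - 1 : ℕ) : ℕ∞) (fderiv ℝ ζ) := hζ.fderiv_right hm1le
  have hι' : ContDiff ℝ ((m - 1 : ℕ) : ℕ∞) ι := hι.of_le (by exact_mod_cast hm1le')
  set f : Rd d → (Rd d →L[ℝ] Rd d) := fun y => Bmap ζ (ι y) with hfdef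
  have hfcd : ContDiff ℝ ((m - 1 : ℕ) : ℕ∞) f := by
    have : f = fun y => ContinuousLinearMap.id ℝ (Rd d) + fderiv ℝ ζ (ι y) := rfl
    rw [this]
    exact contDiff_const.add (hfdζ.comp hι')
  have hTop : ∀ n : ℕ, ((n : ℕ∞) : WithTop ℕ∞) ≤ ((⊤ : ℕ∞) : WithTop ℕ∞) :=
    fun n => WithTop.coe_le_coe.2 le_top
  have hdet' : ContDiff ℝ ((m - 1 : ℕ) : ℕ∞) (fun A : Rd d →L[ℝ] Rd d => A.det) :=
    contDiff_det.of_le (hTop (m - 1))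
  set u : Rd d → ℝ := fun y => (f y).det with hudef
  have hucd : ContDiff ℝ ((m - 1 : ℕ) : ℕ∞) u := hdet'.comp hfcd
  have hfnorm : ∀ y, ‖f y‖ ≤ ρ := by
    intro y
    refine le_trans (norm_add_le _ _) ?_
    have ha : ‖ContinuousLinearMap.id ℝ (Rd d)‖ ≤ 1 := ContinuousLinearMap.norm_id_le
    have hb : ‖fderiv ℝ ζ (ι y)‖ ≤ Mm := by
      rw [norm_fderiv_eq]; exact hM 1 hm (ι y)
    have : Mm ≤ max 0 Mm := le_max_right _ _
    rw [hρdef]; linarith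
  have hfball : ∀ y, f y ∈ Metric.closedBall (0 : Rd d →L[ℝ] Rd d) ρ := by
    intro y
    rw [Metric.mem_closedBall, dist_eq_norm, sub_zero]
    exact hfnorm y
  have humem : ∀ y, u y ∈ Set.Icc lam Cdet := by
    intro y
    constructor
    · exact det_Bmap_ge hlam hdet (ι y)
    · have := hUdet (f y) (hfball y)
      rw [norm_iteratedFDeriv_zero] at this
      calc u y ≤ |u y| := le_abs_self _
        _ = ‖(f y).det‖ := rfl
        _ ≤ Cdet := this
  -- derivative bounds for f (order ≥ 1), constants only
  have hfd_bound : ∀ c, 1 ≤ c → c ≤ k → ∀ y : Rd d,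
      ‖iteratedFDeriv ℝ c f y‖ ≤ E0 := by
    intro c hc1 hck y
    have hcm1 : c ≤ m - 1 := le_trans hck hk
    have heq : ‖iteratedFDeriv ℝ c f y‖ =
        ‖iteratedFDeriv ℝ c (fun z => fderiv ℝ ζ (ι z)) y‖ := by
      refine norm_iteratedFDeriv_const_add ?_ (by omega) _ y
      exact (hfdζ.comp hι').of_le (by exact_mod_cast hcm1)
    rw [heq]
    have hcomp : ‖iteratedFDeriv ℝ c ((fderiv ℝ ζ) ∘ ι) y‖ ≤
        (c.factorial : ℝ) * (max 1 Mm) * R ^ c := by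
      refine norm_iteratedFDeriv_comp_le (N := ((m - 1 : ℕ) : WithTop ℕ∞))
        hfdζ hι' (by exact_mod_cast hcm1) y ?_ ?_
      · intro s hs
        rw [norm_iteratedFDeriv_fderiv]
        exact le_trans (hM (s + 1) (by omega) (ι y)) (le_max_right _ _)
      · intro l hl1 hl2
        refine le_trans (hR ζ ι ⟨hζ, hdet, hM, h1, h2⟩ l hl1 (by omega) y) ?_
        exact le_self_pow₀ hR1 (by omega)
    refine le_trans hcomp ?_
    refine le_trans ?_ (le_max_right 1 _)
    have hf1 : (c.factorial : ℝ) ≤ (k.factorial : ℝ) := by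
      exact_mod_cast Nat.factorial_le hck
    have hf2 : R ^ c ≤ R ^ k := pow_le_pow_right₀ hR1 hck
    have hmax1 : (0:ℝ) < max 1 Mm := lt_of_lt_of_le one_pos (le_max_left _ _)
    calc (c.factorial : ℝ) * (max 1 Mm) * R ^ c ≤ (k.factorial : ℝ) * (max 1 Mm) * R ^ c := by
          apply mul_le_mul_of_nonneg_right (mul_le_mul_of_nonneg_right hf1 hmax1.le) (by positivity)
      _ ≤ (k.factorial : ℝ) * (max 1 Mm) * R ^ k := by
          apply mul_le_mul_of_nonneg_left hf2 (by positivity)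
  -- derivative bounds for u (order ≥ 1), constants only
  have hud_bound : ∀ c, 1 ≤ c → c ≤ k → ∀ y : Rd d,
      ‖iteratedFDeriv ℝ c u y‖ ≤ Du ^ c := by
    intro c hc1 hck y
    have hcm1 : c ≤ m - 1 := le_trans hck hk
    have hcomp : ‖iteratedFDeriv ℝ c ((fun A : Rd d →L[ℝ] Rd d => A.det) ∘ f) y‖ ≤
        (c.factorial : ℝ) * Cdet * E0 ^ c := by
      refine norm_iteratedFDeriv_comp_le (N := ((m - 1 : ℕ) : WithTop ℕ∞))
        hdet' hfcd (by exact_mod_cast hcm1) y ?_ ?_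
      · intro s hs
        exact hCdet s (le_trans hs hck) (f y) (hfball y)
      · intro l hl1 hl2
        refine le_trans (hfd_bound l hl1 (le_trans hl2 hck) y) ?_
        exact le_self_pow₀ hE01 (by omega)
    have heq : u = (fun A : Rd d →L[ℝ] Rd d => A.det) ∘ f := rfl
    rw [heq]
    refine le_trans hcomp ?_
    have h1' : (c.factorial : ℝ) ≤ (k.factorial : ℝ) := by
      exact_mod_cast Nat.factorial_le hck
    have h2' : E0 ^ c ≤ E0 ^ k := pow_le_pow_right₀ hE01 hck
    have hBuc : (c.factorial : ℝ) * Cdet * E0 ^ c ≤ Bu := by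
      rw [hBudef]
      calc (c.factorial : ℝ) * Cdet * E0 ^ c ≤ (k.factorial : ℝ) * Cdet * E0 ^ c := by
            apply mul_le_mul_of_nonneg_right (mul_le_mul_of_nonneg_right h1' hCdet0) (by positivity)
        _ ≤ (k.factorial : ℝ) * Cdet * E0 ^ k := by
            apply mul_le_mul_of_nonneg_left h2' (by positivity)
    refine le_trans hBuc ?_
    refine le_trans (le_max_right 1 Bu) ?_
    exact le_self_pow₀ hDu1 (by omega)
  -- now the composition with the inverse
  have hmain : ‖iteratedFDerivWithin ℝ j ((Inv.inv : ℝ → ℝ) ∘ u) Set.univ x‖ ≤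
      (j.factorial : ℝ) * CI * Du ^ j := by
    refine norm_iteratedFDerivWithin_comp_le (t := Set.Ioi (lam / 2))
      (N := ((m - 1 : ℕ) : WithTop ℕ∞))
      (hInv.of_le (hTop (m - 1))) hucd.contDiffOn (by exact_mod_cast le_trans hj hk)
      isOpen_Ioi.uniqueDiffOn uniqueDiffOn_univ ?_ (Set.mem_univ x) ?_ ?_
    · intro y _
      exact lt_of_lt_of_le (half_lt_self hlam) (humem y).1
    · intro r hr
      exact hCI r (le_trans hr (le_trans hj le_rfl)) (u x) (humem x)
    · intro j' hj'1 hj'2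
      rw [iteratedFDerivWithin_univ]
      exact hud_bound j' hj'1 (le_trans hj'2 hj) x
  have heq2 : (fun y => ((Bmap ζ (ι y)).det)⁻¹) = (Inv.inv : ℝ → ℝ) ∘ u := rfl
  rw [heq2, ← iteratedFDerivWithin_univ]
  refine le_trans hmain ?_
  have h1' : (j.factorial : ℝ) ≤ (k.factorial : ℝ) := by
    exact_mod_cast Nat.factorial_le hj
  have h2' : Du ^ j ≤ Du ^ k := pow_le_pow_right₀ hDu1 hj
  calc (j.factorial : ℝ) * CI * Du ^ j ≤ (k.factorial : ℝ) * CI * Du ^ j := by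
        apply mul_le_mul_of_nonneg_right (mul_le_mul_of_nonneg_right h1' hCI0) (by positivity)
    _ ≤ (k.factorial : ℝ) * CI * Du ^ k := by
        apply mul_le_mul_of_nonneg_left h2' (by positivity)


lemma main_k (d m : ℕ) (hm : 1 ≤ m) (lam Mm : ℝ) (hlam : 0 < lam) (k : ℕ) (hk : k ≤ m - 1) :
    ∃ Nk : ℝ, 0 ≤ Nk ∧ ∀ ζ ι : Rd d → Rd d, Hyp d m lam Mm ζ ι →
      ∀ C : ℝ,
        (∀ j, 1 ≤ j → j ≤ k + 1 → ∀ x : Rd d, ‖iteratedFDeriv ℝ j ζ x‖ ≤ C) →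
        ∀ x : Rd d,
          ‖iteratedFDeriv ℝ k
              (fun y : Rd d =>
                (ContinuousLinearMap.id ℝ (Rd d)
                    + fderiv ℝ (fun z : Rd d => ι z - z) y).det - 1) x‖
            ≤ Nk * C := by
  obtain ⟨Av, hAv0, hAv⟩ := v_bound d m hm lam Mm hlam k hk
  obtain ⟨W, hW0, hW⟩ := w_bound d m hm lam Mm hlam k hk
  refine ⟨2 ^ k * Av * W, by positivity, ?_⟩
  intro ζ ι H C hC x
  obtain ⟨hζ, hdet, hM, h1, h2⟩ := H
  have hMm0 : 0 ≤ Mm := Mm_nonneg (m := m) ⟨hζ, hdet, hM, h1, h2⟩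
  have hC0 : 0 ≤ C := le_trans (norm_nonneg _) (hC 1 le_rfl (by omega) 0)
  have hkm : k + 1 ≤ m := by omega
  set C' : ℝ := min C Mm with hC'def
  have hC'0 : 0 ≤ C' := le_min hC0 hMm0
  have hC'Mm : C' ≤ Mm := min_le_right _ _
  have hC'C : C' ≤ C := min_le_left _ _
  have hC' : ∀ j, 1 ≤ j → j ≤ k + 1 → ∀ y : Rd d, ‖iteratedFDeriv ℝ j ζ y‖ ≤ C' :=
    fun j hj1 hj2 y => le_min (hC j hj1 hj2 y) (hM j (by omega) y)
  have hι : ContDiff ℝ (m : ℕ∞) ι := iota_contDiff hm hlam hζ hdet h1 h2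
  have hm1 : (1 : WithTop ℕ∞) ≤ ((m : ℕ∞) : WithTop ℕ∞) := by exact_mod_cast hm
  -- rewrite the target function as a product
  set u : Rd d → ℝ := fun y => (Bmap ζ (ι y)).det with hudef
  have hune : ∀ y, u y ≠ 0 := fun y =>
    ne_of_gt (lt_of_lt_of_le hlam (det_Bmap_ge hlam hdet (ι y)))
  have hfun : (fun y : Rd d =>
      (ContinuousLinearMap.id ℝ (Rd d) + fderiv ℝ (fun z : Rd d => ι z - z) y).det - 1) =
      (fun y => (1 - u y) * (u y)⁻¹) := by
    funext y
    have hdiff : DifferentiableAt ℝ ι y := (hι.differentiable (ne_of_gt (lt_of_lt_of_le zero_lt_one hm1))).differentiableAt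
    have hfd : fderiv ℝ (fun z : Rd d => ι z - z) y = fderiv ℝ ι y -
        ContinuousLinearMap.id ℝ (Rd d) := by
      rw [fderiv_fun_sub hdiff differentiableAt_fun_id]
      congr 1
      exact fderiv_id'
    have hBe : ContinuousLinearMap.id ℝ (Rd d) + fderiv ℝ (fun z : Rd d => ι z - z) y =
        fderiv ℝ ι y := by
      rw [hfd]; abel
    rw [hBe, det_fderiv_iota hm hlam hζ hdet h1 h2 y]
    have hne : (Bmap ζ (ι y)).det ≠ 0 := hune y
    change _ = (1 - (Bmap ζ (ι y)).det) * ((Bmap ζ (ι y)).det)⁻¹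
    field_simp
  rw [hfun]
  -- smoothness of the two factors
  have hm1le : ((m - 1 : ℕ) : WithTop ℕ∞) + 1 ≤ ((m : ℕ∞) : WithTop ℕ∞) := by
    have heq : (m - 1) + 1 = m := Nat.succ_pred_eq_of_pos hm
    refine le_of_eq ?_
    calc ((m - 1 : ℕ) : WithTop ℕ∞) + 1 = (((m - 1) + 1 : ℕ) : WithTop ℕ∞) := by push_cast; ring
      _ = ((m : ℕ∞) : WithTop ℕ∞) := by rw [heq]; norm_cast
  have hm1le' : ((m - 1 : ℕ) : ℕ∞) ≤ (m : ℕ∞) := by norm_cast; omega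
  have hfdζ : ContDiff ℝ ((m - 1 : ℕ) : ℕ∞) (fderiv ℝ ζ) := hζ.fderiv_right hm1le
  have hι' : ContDiff ℝ ((m - 1 : ℕ) : ℕ∞) ι := hι.of_le (by exact_mod_cast hm1le')
  have hTop : ∀ n : ℕ, ((n : ℕ∞) : WithTop ℕ∞) ≤ ((⊤ : ℕ∞) : WithTop ℕ∞) :=
    fun n => WithTop.coe_le_coe.2 le_top
  have hBcd : ContDiff ℝ ((m - 1 : ℕ) : ℕ∞) (fun y => Bmap ζ (ι y)) := by
    have hthis : (fun y => Bmap ζ (ι y)) =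
        fun y => ContinuousLinearMap.id ℝ (Rd d) + fderiv ℝ ζ (ι y) := rfl
    rw [hthis]
    exact contDiff_const.add (hfdζ.comp hι')
  have hucd : ContDiff ℝ ((m - 1 : ℕ) : ℕ∞) u :=
    (contDiff_det.of_le (hTop (m - 1))).comp hBcd
  have hv : ContDiff ℝ ((m - 1 : ℕ) : ℕ∞) (fun y => 1 - u y) := contDiff_const.sub hucd
  have hw' : ContDiff ℝ ((m - 1 : ℕ) : ℕ∞) (fun y => (u y)⁻¹) := by
    rw [contDiff_iff_contDiffAt]
    intro y
    exact (contDiffAt_inv ℝ (hune y)).comp y hucd.contDiffAt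
  have hmul := norm_iteratedFDeriv_mul_le (𝕜 := ℝ) (A := ℝ)
    (N := ((m - 1 : ℕ) : WithTop ℕ∞)) hv hw' x (n := k) (by exact_mod_cast hk)
  refine le_trans hmul ?_
  have hterm : ∀ i ∈ Finset.range (k + 1),
      (k.choose i : ℝ) * ‖iteratedFDeriv ℝ i (fun y => 1 - u y) x‖ *
        ‖iteratedFDeriv ℝ (k - i) (fun y => (u y)⁻¹) x‖ ≤
      (k.choose i : ℝ) * (Av * C' * W) := by
    intro i hi
    have hik : i ≤ k := Nat.lt_succ_iff.mp (Finset.mem_range.mp hi)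
    have hvb : ‖iteratedFDeriv ℝ i (fun y => 1 - u y) x‖ ≤ Av * C' :=
      hAv ζ ι ⟨hζ, hdet, hM, h1, h2⟩ C' hC'0 hC'Mm hC' i hik x
    have hwb : ‖iteratedFDeriv ℝ (k - i) (fun y => (u y)⁻¹) x‖ ≤ W :=
      hW ζ ι ⟨hζ, hdet, hM, h1, h2⟩ (k - i) (Nat.sub_le k i) x
    have hch : (0:ℝ) ≤ (k.choose i : ℝ) := by positivity
    calc (k.choose i : ℝ) * ‖iteratedFDeriv ℝ i (fun y => 1 - u y) x‖ *
          ‖iteratedFDeriv ℝ (k - i) (fun y => (u y)⁻¹) x‖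
        ≤ (k.choose i : ℝ) * (Av * C') *
          ‖iteratedFDeriv ℝ (k - i) (fun y => (u y)⁻¹) x‖ := by
          apply mul_le_mul_of_nonneg_right (mul_le_mul_of_nonneg_left hvb hch) (norm_nonneg _)
      _ ≤ (k.choose i : ℝ) * (Av * C') * W := by
          apply mul_le_mul_of_nonneg_left hwb (by positivity)
      _ = (k.choose i : ℝ) * (Av * C' * W) := by ring
  refine le_trans (Finset.sum_le_sum hterm) ?_
  rw [← Finset.sum_mul]
  have hsumch : (∑ i ∈ Finset.range (k + 1), (k.choose i : ℝ)) = (2 : ℝ) ^ k := by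
    have := Nat.sum_range_choose k
    have hcast : ((∑ i ∈ Finset.range (k + 1), k.choose i : ℕ) : ℝ) = ((2 ^ k : ℕ) : ℝ) := by
      exact_mod_cast congrArg (Nat.cast : ℕ → ℝ) this
    push_cast at hcast
    exact hcast
  rw [hsumch]
  calc (2:ℝ) ^ k * (Av * C' * W) = (2 ^ k * Av * W) * C' := by ring
    _ ≤ (2 ^ k * Av * W) * C := by
        apply mul_le_mul_of_nonneg_left hC'C (by positivity)


end St3

/-- let `ζ : ℝ^d → ℝ^d` be `C^m` (`m ≥ 1`) with
`λ ≤ |det(I + θDζ)|` for `θ ∈ [0,1]` and `max_{0≤k≤m} sup_x ‖D^kζ(x)‖ ≤ M_m`,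
let `τ(x) = x + ζ(x)` (a `C^m`-diffeomorphism with inverse `ι`),
`ζ*(x) = −x + τ^{-1}(x)` and `𝔠(x) = det(I + Dζ*(x)) − 1`.  Then for every
`0 ≤ k ≤ m−1` one has `sup_x |D^k 𝔠(x)| ≤ N max_{1≤j≤k+1} sup_x ‖D^j ζ‖`
with a constant `N = N(d, λ, m, M_m)`. -/
theorem statement3 (d m : ℕ) (hm : 1 ≤ m) (lam Mm : ℝ) (hlam : 0 < lam) :
    ∃ N : ℝ,
      ∀ ζ ι : Rd d → Rd d, ContDiff ℝ (m : ℕ∞) ζ →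
        (∀ θ ∈ Set.Icc (0 : ℝ) 1, ∀ x : Rd d,
          lam ≤ |(ContinuousLinearMap.id ℝ (Rd d) + θ • fderiv ℝ ζ x).det|) →
        (∀ k ≤ m, ∀ x : Rd d, ‖iteratedFDeriv ℝ k ζ x‖ ≤ Mm) →
        Function.LeftInverse ι (fun x => x + ζ x) →
        Function.RightInverse ι (fun x => x + ζ x) →
        ∀ k ≤ m - 1, ∀ C : ℝ,
          (∀ j, 1 ≤ j → j ≤ k + 1 → ∀ x : Rd d, ‖iteratedFDeriv ℝ j ζ x‖ ≤ C) →
          ∀ x : Rd d,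
            ‖iteratedFDeriv ℝ k
                (fun y : Rd d =>
                  (ContinuousLinearMap.id ℝ (Rd d)
                      + fderiv ℝ (fun z : Rd d => ι z - z) y).det - 1) x‖
              ≤ N * C := by
  classical
  have H : ∀ k : ℕ, ∃ Nk : ℝ, 0 ≤ Nk ∧ (k ≤ m - 1 →
      ∀ ζ ι : Rd d → Rd d, St3.Hyp d m lam Mm ζ ι →
      ∀ C : ℝ,
        (∀ j, 1 ≤ j → j ≤ k + 1 → ∀ x : Rd d, ‖iteratedFDeriv ℝ j ζ x‖ ≤ C) →
        ∀ x : Rd d,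
          ‖iteratedFDeriv ℝ k
              (fun y : Rd d =>
                (ContinuousLinearMap.id ℝ (Rd d)
                    + fderiv ℝ (fun z : Rd d => ι z - z) y).det - 1) x‖
            ≤ Nk * C) := by
    intro k
    by_cases hk : k ≤ m - 1
    · obtain ⟨Nk, hNk0, hNk⟩ := St3.main_k d m hm lam Mm hlam k hk
      exact ⟨Nk, hNk0, fun _ => hNk⟩
    · exact ⟨0, le_rfl, fun h => absurd h hk⟩
  choose g hg0 hg using H
  refine ⟨∑ k ∈ Finset.range m, g k, ?_⟩
  intro ζ ι hζ hdet hM h1 h2 k hk C hC x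
  have hb := hg k hk ζ ι ⟨hζ, hdet, hM, h1, h2⟩ C hC x
  refine le_trans hb ?_
  have hC0 : 0 ≤ C := le_trans (norm_nonneg _) (hC 1 le_rfl (by omega) 0)
  apply mul_le_mul_of_nonneg_right ?_ hC0
  exact Finset.single_le_sum (fun i _ => hg0 i) (Finset.mem_range.2 (by omega))

end
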